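/- Let G be a group with elements c, d, e, k, t and elements s_1, ..., s_N satisfying: d^α s_β = s_β d and e s_β = s_β e^α and s_β c = c s_β for all β; d^{g(i)}F_i e^{h(i)} c = c d^{g'(i)} E_i e^{h'(i)} for some index i; ct = tc; dt = td; ck = kc; ek = ke; and P⁻¹tPk = kP⁻¹tP, where P = R F_i S for words R, S in s_1,...,s_N. Then Q⁻¹tQk = kQ⁻¹tQ holds in G, where Q = R E_i S. -/

import Mathlib

private lemma push_d {G : Type*} [Group G] {ι : Type*} (s : ι → G) (d : G) (α : ℕ)
    (hB1 : ∀ β, d ^ α * s β = s β * d) :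
    ∀ (W : List ι) (m : ℕ),
      d ^ (m * α ^ W.length) * (W.map s).prod = (W.map s).prod * d ^ m := by
  intro W
  induction W with
  | nil => intro m; simp
  | cons w W ih =>
    intro m
    have hstep : ∀ n : ℕ, d ^ (n * α) * s w = s w * d ^ n := by
      intro n
      have h0 : d ^ α = s w * d * (s w)⁻¹ := by
        rw [← hB1 w]; group
      calc d ^ (n * α) * s w = (d ^ α) ^ n * s w := by rw [← pow_mul, Nat.mul_comm]
        _ = (s w * d * (s w)⁻¹) ^ n * s w := by rw [h0]
        _ = (s w * d ^ n * (s w)⁻¹) * s w := by rw [conj_pow]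
        _ = s w * d ^ n := by group
    simp only [List.map_cons, List.prod_cons, List.length_cons, ← mul_assoc]
    have : m * α ^ (W.length + 1) = (m * α ^ W.length) * α := by ring
    rw [this, hstep (m * α ^ W.length), mul_assoc, ih m, mul_assoc]

private lemma push_e {G : Type*} [Group G] {ι : Type*} (s : ι → G) (e : G) (α : ℕ)
    (hB2 : ∀ β, e * s β = s β * e ^ α) :
    ∀ (W : List ι) (m : ℕ),
      e ^ m * (W.map s).prod = (W.map s).prod * e ^ (m * α ^ W.length) := by
  intro W
  induction W with
  | nil => intro m; simp
  | cons w W ih =>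
    intro m
    have hstep : ∀ n : ℕ, e ^ n * s w = s w * e ^ (n * α) := by
      intro n
      have h0 : e = s w * e ^ α * (s w)⁻¹ := by
        rw [← hB2 w]; group
      calc e ^ n * s w = (s w * e ^ α * (s w)⁻¹) ^ n * s w := by rw [← h0]
        _ = (s w * (e ^ α) ^ n * (s w)⁻¹) * s w := by rw [conj_pow]
        _ = s w * e ^ (n * α) := by rw [← pow_mul, Nat.mul_comm]; group
    simp only [List.map_cons, List.prod_cons, List.length_cons, ← mul_assoc]
    rw [hstep m, mul_assoc, ih (m * α)]
    have : m * α * α ^ W.length = m * α ^ (W.length + 1) := by ring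
    rw [this, mul_assoc]

private lemma push_c {G : Type*} [Group G] {ι : Type*} (s : ι → G) (c : G)
    (hB3 : ∀ β, s β * c = c * s β) (W : List ι) :
    (W.map s).prod * c = c * (W.map s).prod := by
  induction W with
  | nil => simp
  | cons w W ih =>
    simp only [List.map_cons, List.prod_cons, mul_assoc, ih]
    rw [← mul_assoc, hB3 w, mul_assoc]

/-- Borisov-type relations imply the commutation relation for `Q = R Eᵢ S` if it holds
for `P = R Fᵢ S`.  Words in the letters `s₁,…,s_N` are represented as lists over an index
type `ι`, evaluated in `G` by `fun W => (W.map s).prod`. -/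
theorem commutation_transfer {G : Type*} [Group G] {ι : Type*} (s : ι → G)
    (c d e k t : G) (α g h g' h' : ℕ)
    (hα : 0 < α) (hg : 0 < g) (hh : 0 < h) (hg' : 0 < g') (hh' : 0 < h')
    (Fw Ew Rw Sw : List ι)
    (hB1 : ∀ β, d ^ α * s β = s β * d)
    (hB2 : ∀ β, e * s β = s β * e ^ α)
    (hB3 : ∀ β, s β * c = c * s β)
    (hB4 : d ^ g * (Fw.map s).prod * e ^ h * c = c * d ^ g' * (Ew.map s).prod * e ^ h')
    (hB5 : c * t = t * c) (hB6 : d * t = t * d)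
    (hB7 : c * k = k * c) (hB8 : e * k = k * e)
    (hB9 : ((Rw ++ Fw ++ Sw).map s).prod⁻¹ * t * ((Rw ++ Fw ++ Sw).map s).prod * k =
           k * ((Rw ++ Fw ++ Sw).map s).prod⁻¹ * t * ((Rw ++ Fw ++ Sw).map s).prod) :
    ((Rw ++ Ew ++ Sw).map s).prod⁻¹ * t * ((Rw ++ Ew ++ Sw).map s).prod * k =
      k * ((Rw ++ Ew ++ Sw).map s).prod⁻¹ * t * ((Rw ++ Ew ++ Sw).map s).prod := by
  set R := (Rw.map s).prod with hR
  set S := (Sw.map s).prod with hS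
  set F := (Fw.map s).prod with hF
  set E := (Ew.map s).prod with hE
  set P := R * F * S with hP
  set Q := R * E * S with hQ
  have hPdef : ((Rw ++ Fw ++ Sw).map s).prod = P := by
    simp [hP, hR, hS, hF, List.map_append, List.prod_append, mul_assoc]
  have hQdef : ((Rw ++ Ew ++ Sw).map s).prod = Q := by
    simp [hQ, hR, hS, hE, List.map_append, List.prod_append, mul_assoc]
  rw [hPdef] at hB9
  rw [hQdef]
  -- hatted exponents
  set a1 := g * α ^ Rw.length with ha1
  set a2 := g' * α ^ Rw.length with ha2
  set b1 := h * α ^ Sw.length with hb1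
  set b2 := h' * α ^ Sw.length with hb2
  -- key identity: d^a1 * P * e^b1 * c = c * d^a2 * Q * e^b2
  have key : d ^ a1 * P * e ^ b1 * c = c * d ^ a2 * Q * e ^ b2 := by
    have lhs : d ^ a1 * P * e ^ b1 * c = R * (d ^ g * F * e ^ h * c) * S := by
      rw [hP]
      rw [show d ^ a1 * (R * F * S) * e ^ b1 * c
            = (d ^ a1 * R) * F * S * e ^ b1 * c by group]
      rw [push_d s d α hB1 Rw g]
      rw [show R * d ^ g * F * S * e ^ b1 * c
            = R * d ^ g * F * (S * e ^ b1) * c by group]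
      rw [← push_e s e α hB2 Sw h]
      rw [show R * d ^ g * F * (e ^ h * S) * c
            = R * d ^ g * F * e ^ h * (S * c) by group]
      rw [push_c s c hB3 Sw]
      rw [← hS]
      group
    have rhs : c * d ^ a2 * Q * e ^ b2 = R * (c * d ^ g' * E * e ^ h') * S := by
      rw [hQ]
      rw [show c * d ^ a2 * (R * E * S) * e ^ b2
            = c * (d ^ a2 * R) * E * (S * e ^ b2) by group]
      rw [push_d s d α hB1 Rw g', ← push_e s e α hB2 Sw h']
      rw [show c * (R * d ^ g') * E * (e ^ h' * S)
            = (c * R) * (d ^ g' * E * e ^ h') * S by group]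
      rw [← push_c s c hB3 Rw]
      rw [← hR]
      group
    rw [lhs, rhs, hB4]
  -- Q in terms of P
  have hQP : Q = (d ^ a2)⁻¹ * c⁻¹ * (d ^ a1 * P * e ^ b1 * c) * (e ^ b2)⁻¹ := by
    rw [key]; group
  -- commutation facts
  have htc : Commute t c := by
    show t * c = c * t
    rw [hB5]
  have htd : Commute t d := by
    show t * d = d * t
    rw [hB6]
  have hkc : Commute k c := by
    show k * c = c * k
    rw [hB7]
  have hke : Commute k e := by
    show k * e = e * k
    rw [hB8]
  have hu : Commute k (P⁻¹ * t * P) := by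
    show k * (P⁻¹ * t * P) = (P⁻¹ * t * P) * k
    rw [show k * (P⁻¹ * t * P) = k * P⁻¹ * t * P by group, ← hB9]
  -- A = e^b1 * c * (e^b2)⁻¹ ; conjugation identity
  set A := e ^ b1 * c * (e ^ b2)⁻¹ with hA
  set B := (d ^ a2)⁻¹ * c⁻¹ * d ^ a1 with hB
  have htB : Commute t B := by
    rw [hB]
    exact ((htd.pow_right a2).inv_right.mul_right htc.inv_right).mul_right
      (htd.pow_right a1)
  have hQ2 : Q = B * P * A := by rw [hQP, hA, hB]; group
  have hconj : Q⁻¹ * t * Q = A⁻¹ * (P⁻¹ * t * P) * A := by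
    rw [hQ2]
    calc (B * P * A)⁻¹ * t * (B * P * A)
        = A⁻¹ * P⁻¹ * (B⁻¹ * (t * B)) * P * A := by group
      _ = A⁻¹ * P⁻¹ * (B⁻¹ * (B * t)) * P * A := by rw [htB.eq]
      _ = A⁻¹ * (P⁻¹ * t * P) * A := by group
  have hkA : Commute k A := by
    rw [hA]
    exact ((hke.pow_right b1).mul_right hkc).mul_right (hke.pow_right b2).inv_right
  have hfinal : Commute k (Q⁻¹ * t * Q) := by
    rw [hconj]
    exact (hkA.inv_right.mul_right hu).mul_right hkA
  have := hfinal.eq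
  rw [show k * (Q⁻¹ * t * Q) = k * Q⁻¹ * t * Q by group,
      show Q⁻¹ * t * Q * k = Q⁻¹ * t * (Q * k) by group] at this
  rw [show Q⁻¹ * t * Q * k = Q⁻¹ * t * (Q * k) by group, this]
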